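/- Let M_∞ ⊆ ℕ be a strongly 3-separating set. If M and N are subsets of M_∞ with |M| ≥ 3 and |N| ≥ 3 and M ≠ N, then the semigroups S_M and S_N are not isomorphic. Consequently {S_M : M ⊆ M_∞, |M| ≥ 3} is a family of pairwise non-isomorphic subsemigroups of ℕ × ℕ. -/

import Mathlib

/-- `SM M` is the subsemigroup of `ℕ × ℕ` generated by `{(1, m) : m ∈ M}`. -/
def SM (M : Set ℕ+) : AddSubsemigroup (ℕ+ × ℕ+) :=
  AddSubsemigroup.closure {p : ℕ+ × ℕ+ | ∃ m ∈ M, p = (1, m)}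

/-- A set `M ⊆ ℕ` is 3-separating: `|M| ≥ 3` and for any two triples of
pairwise distinct elements of `M`, the identity
`n₂(m₃−m₁) = n₁(m₃−m₂) + n₃(m₂−m₁)` holds iff the triples are equal. -/
def Sep3 (M : Set ℕ+) : Prop :=
  3 ≤ M.encard ∧
    ∀ m₁ m₂ m₃ n₁ n₂ n₃ : ℕ+,
      m₁ ∈ M → m₂ ∈ M → m₃ ∈ M → n₁ ∈ M → n₂ ∈ M → n₃ ∈ M →
      m₁ ≠ m₂ → m₁ ≠ m₃ → m₂ ≠ m₃ → n₁ ≠ n₂ → n₁ ≠ n₃ → n₂ ≠ n₃ →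
      (((n₂ : ℤ) * ((m₃ : ℤ) - (m₁ : ℤ)) =
          (n₁ : ℤ) * ((m₃ : ℤ) - (m₂ : ℤ)) + (n₃ : ℤ) * ((m₂ : ℤ) - (m₁ : ℤ))) ↔
        (m₁, m₂, m₃) = (n₁, n₂, n₃))

/-- A set `M ⊆ ℕ` is strongly 3-separating: it is 3-separating and for any
two pairs of distinct elements of `M`, `m₁ − m₂ + n₂ − n₁ = 0` holds iff the
pairs are equal. -/
def StrongSep3 (M : Set ℕ+) : Prop :=
  Sep3 M ∧
    ∀ m₁ m₂ n₁ n₂ : ℕ+,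
      m₁ ∈ M → m₂ ∈ M → n₁ ∈ M → n₂ ∈ M → m₁ ≠ m₂ → n₁ ≠ n₂ →
      (((m₁ : ℤ) - (m₂ : ℤ) + (n₂ : ℤ) - (n₁ : ℤ) = 0) ↔ (m₁, m₂) = (n₁, n₂))

/-- `pnsmul n a = (n+1) • a` for semigroups. -/
def pnsmul {α : Type*} [Add α] : ℕ → α → α
  | 0, a => a
  | n+1, a => a + pnsmul n a

lemma map_pnsmul {α β : Type*} [Add α] [Add β] (f : α ≃+ β) (n : ℕ) (a : α) :
    f (pnsmul n a) = pnsmul n (f a) := by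
  induction n with
  | zero => rfl
  | succ k ih => simp [pnsmul, map_add, ih]

lemma pnsmul_coe {S : AddSubsemigroup (ℕ+ × ℕ+)} (n : ℕ) (x : S) :
    ((pnsmul n x : S) : ℕ+ × ℕ+) = pnsmul n (x : ℕ+ × ℕ+) := by
  induction n with
  | zero => rfl
  | succ k ih => rw [pnsmul, pnsmul, AddMemClass.coe_add, ih]

lemma pnsmul_fst (n : ℕ) (p : ℕ+ × ℕ+) : (pnsmul n p).1 = pnsmul n p.1 := by
  induction n with
  | zero => rfl
  | succ k ih => simp only [pnsmul, Prod.fst_add, ih]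

lemma pnsmul_snd (n : ℕ) (p : ℕ+ × ℕ+) : (pnsmul n p).2 = pnsmul n p.2 := by
  induction n with
  | zero => rfl
  | succ k ih => simp only [pnsmul, Prod.snd_add, ih]

lemma pnsmul_pnat (n : ℕ) (a : ℕ+) : ((pnsmul n a : ℕ+) : ℕ) = (n+1) * a := by
  induction n with
  | zero => simp [pnsmul]
  | succ k ih => push_cast [pnsmul, ih]; ring

lemma pnsmul_mem {S : AddSubsemigroup (ℕ+ × ℕ+)} {x : ℕ+ × ℕ+} (hx : x ∈ S) (n : ℕ) :
    pnsmul n x ∈ S := by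
  induction n with
  | zero => exact hx
  | succ k ih => exact S.add_mem hx ih

lemma SM_struct (M : Set ℕ+) {p : ℕ+ × ℕ+} (hp : p ∈ SM M) :
    (∃ m ∈ M, p = (1, m)) ∨ ∃ u v, u ∈ SM M ∧ v ∈ SM M ∧ p = u + v := by
  induction hp using AddSubsemigroup.closure_induction with
  | mem x hx => exact Or.inl hx
  | add x y hx hy ihx ihy => exact Or.inr ⟨x, y, hx, hy, rfl⟩

lemma SM_fst_one {M : Set ℕ+} {p : ℕ+ × ℕ+} (hp : p ∈ SM M) (h1 : p.1 = 1) :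
    ∃ m ∈ M, p = (1, m) := by
  rcases SM_struct M hp with h | ⟨u, v, _, _, rfl⟩
  · exact h
  · exfalso
    have : ((u.1 : ℕ) + v.1 : ℕ) = 1 := by
      have := congrArg (fun x : ℕ+ => (x : ℕ)) h1
      simpa using this
    have hu : 0 < (u.1 : ℕ) := u.1.pos
    have hv : 0 < (v.1 : ℕ) := v.1.pos
    omega

def gen {M : Set ℕ+} {m : ℕ+} (hm : m ∈ M) : SM M :=
  ⟨(1, m), AddSubsemigroup.subset_closure ⟨m, hm, rfl⟩⟩

lemma image_gen {M N : Set ℕ+} (φ : SM M ≃+ SM N) {m : ℕ+} (hm : m ∈ M) :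
    ∃ n ∈ N, ((φ (gen hm) : SM N) : ℕ+ × ℕ+) = (1, n) := by
  rcases SM_struct N (φ (gen hm)).2 with h | ⟨u, v, hu, hv, h⟩
  · exact h
  · exfalso
    have h1 : φ (gen hm) = (⟨u, hu⟩ : SM N) + ⟨v, hv⟩ := Subtype.ext h
    have h2 : gen hm = φ.symm ⟨u, hu⟩ + φ.symm ⟨v, hv⟩ := by
      have h2 := congrArg φ.symm h1
      rwa [map_add, AddEquiv.symm_apply_apply] at h2
    have h3 := congrArg (fun w : SM M => ((w : ℕ+ × ℕ+).1 : ℕ)) h2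
    simp only [AddMemClass.coe_add, Prod.fst_add, PNat.add_coe] at h3
    have hu' : 0 < (((φ.symm ⟨u, hu⟩ : SM M) : ℕ+ × ℕ+).1 : ℕ) :=
      ((φ.symm ⟨u, hu⟩ : SM M) : ℕ+ × ℕ+).1.pos
    have hv' : 0 < (((φ.symm ⟨v, hv⟩ : SM M) : ℕ+ × ℕ+).1 : ℕ) :=
      ((φ.symm ⟨v, hv⟩ : SM M) : ℕ+ × ℕ+).1.pos
    have : (((gen hm : SM M) : ℕ+ × ℕ+).1 : ℕ) = 1 := rfl
    omega

lemma fix_gen {Minf M N : Set ℕ+} (hSep : Sep3 Minf) (hM : M ⊆ Minf) (hN : N ⊆ Minf)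
    (φ : SM M ≃+ SM N) {x y z : ℕ+} (hx : x ∈ M) (hy : y ∈ M) (hz : z ∈ M)
    (hxy : x < y) (hyz : y < z) :
    ((φ (gen hx) : SM N) : ℕ+ × ℕ+) = (1, x) ∧
    ((φ (gen hy) : SM N) : ℕ+ × ℕ+) = (1, y) ∧
    ((φ (gen hz) : SM N) : ℕ+ × ℕ+) = (1, z) := by
  obtain ⟨n₁, hn₁, e₁⟩ := image_gen φ hx
  obtain ⟨n₂, hn₂, e₂⟩ := image_gen φ hy
  obtain ⟨n₃, hn₃, e₃⟩ := image_gen φ hz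
  have geninj : ∀ {p q : ℕ+} (hp : p ∈ M) (hq : q ∈ M), gen hp = gen hq → p = q := by
    intro p q hp hq h
    have := congrArg (fun w : SM M => ((w : ℕ+ × ℕ+)).2) h
    simpa [gen] using this
  have hn12 : n₁ ≠ n₂ := by
    rintro rfl
    exact absurd (geninj hx hy (φ.injective (Subtype.ext (e₁.trans e₂.symm)))) hxy.ne
  have hn13 : n₁ ≠ n₃ := by
    rintro rfl
    exact absurd (geninj hx hz (φ.injective (Subtype.ext (e₁.trans e₃.symm)))) (hxy.trans hyz).ne
  have hn23 : n₂ ≠ n₃ := by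
    rintro rfl
    exact absurd (geninj hy hz (φ.injective (Subtype.ext (e₂.trans e₃.symm)))) hyz.ne
  set A : ℕ := (z : ℕ) - (y : ℕ) with hA
  set B : ℕ := (y : ℕ) - (x : ℕ) with hB
  set C : ℕ := (z : ℕ) - (x : ℕ) with hC
  have hxy' : (x : ℕ) < (y : ℕ) := hxy
  have hyz' : (y : ℕ) < (z : ℕ) := hyz
  have hApos : 0 < A := by omega
  have hBpos : 0 < B := by omega
  have hABC : A + B = C := by omega
  have eA : A - 1 + 1 = A := by omega
  have eB : B - 1 + 1 = B := by omega
  have eC : C - 1 + 1 = C := by omega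
  have rel : pnsmul (A-1) (gen hx) + pnsmul (B-1) (gen hz) = pnsmul (C-1) (gen hy) := by
    apply Subtype.ext
    rw [AddMemClass.coe_add, pnsmul_coe, pnsmul_coe, pnsmul_coe]
    show pnsmul (A-1) ((1 : ℕ+), x) + pnsmul (B-1) ((1 : ℕ+), z) = pnsmul (C-1) ((1 : ℕ+), y)
    apply Prod.ext
    · show (pnsmul (A-1) ((1:ℕ+), x)).1 + (pnsmul (B-1) ((1:ℕ+), z)).1 = _
      rw [pnsmul_fst, pnsmul_fst, pnsmul_fst]
      apply PNat.coe_injective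
      push_cast [pnsmul_pnat]
      omega
    · show (pnsmul (A-1) ((1:ℕ+), x)).2 + (pnsmul (B-1) ((1:ℕ+), z)).2 = _
      rw [pnsmul_snd, pnsmul_snd, pnsmul_snd]
      apply PNat.coe_injective
      push_cast [pnsmul_pnat]
      rw [eA, eB, eC, hA, hB, hC]
      have h1 : (x : ℕ) ≤ (y : ℕ) := hxy'.le
      have h2 : (y : ℕ) ≤ (z : ℕ) := hyz'.le
      have h3 : (x : ℕ) ≤ (z : ℕ) := h1.trans h2
      zify [h1, h2, h3]
      ring
  have rel2 := congrArg φ rel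
  rw [map_add, map_pnsmul, map_pnsmul, map_pnsmul] at rel2
  have rel3 := congrArg (fun w : SM N => (((w : ℕ+ × ℕ+)).2 : ℕ)) rel2
  simp only [AddMemClass.coe_add, pnsmul_coe, e₁, e₂, e₃, Prod.snd_add, pnsmul_snd,
    PNat.add_coe, pnsmul_pnat] at rel3
  rw [eA, eB, eC] at rel3
  -- rel3 : A * n₁ + B * n₃ = C * n₂
  have hAz : (A : ℤ) = (z : ℤ) - (y : ℤ) := by rw [hA]; push_cast [hyz'.le]; ring
  have hBz : (B : ℤ) = (y : ℤ) - (x : ℤ) := by rw [hB]; push_cast [hxy'.le]; ring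
  have hCz : (C : ℤ) = (z : ℤ) - (x : ℤ) := by rw [hC]; push_cast [(hxy'.trans hyz').le]; ring
  have rel3z : (A : ℤ) * n₁ + (B : ℤ) * n₃ = (C : ℤ) * n₂ := by exact_mod_cast rel3
  rw [hAz, hBz, hCz] at rel3z
  have key := (hSep.2 x y z n₁ n₂ n₃ (hM hx) (hM hy) (hM hz) (hN hn₁) (hN hn₂) (hN hn₃)
    hxy.ne (hxy.trans hyz).ne hyz.ne hn12 hn13 hn23).mp (by linarith)
  obtain ⟨rfl, rfl, rfl⟩ : x = n₁ ∧ y = n₂ ∧ z = n₃ := by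
    simpa [Prod.ext_iff] using key
  exact ⟨e₁, e₂, e₃⟩

lemma subset_of_iso {Minf M N : Set ℕ+} (hSep : Sep3 Minf) (hM : M ⊆ Minf) (hN : N ⊆ Minf)
    (hMcard : 3 ≤ M.encard) (φ : SM M ≃+ SM N) : M ⊆ N := by
  intro m hm
  have h2 : 1 < (M \ {m}).encard := by
    rw [Set.encard_diff_singleton_of_mem hm]
    rcases eq_or_ne M.encard ⊤ with h | h
    · rw [h]; simp
    · lift M.encard to ℕ using h with n hn
      have h3 : 3 ≤ n := by exact_mod_cast hMcard
      have hcast : ((n - 1 : ℕ) : ℕ∞) = (n : ℕ∞) - 1 := by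
        simp [Nat.cast_sub (by omega : 1 ≤ n)]
      rw [← hcast]
      exact_mod_cast (by omega : 1 < n - 1)
  obtain ⟨a, b, ha, hb, hab⟩ := Set.one_lt_encard_iff.mp h2
  obtain ⟨haM, ham⟩ : a ∈ M ∧ a ≠ m := ⟨ha.1, ha.2⟩
  obtain ⟨hbM, hbm⟩ : b ∈ M ∧ b ≠ m := ⟨hb.1, hb.2⟩
  suffices h : ((φ (gen hm) : SM N) : ℕ+ × ℕ+) = (1, m) by
    obtain ⟨n, hn, e⟩ := SM_fst_one (φ (gen hm)).2 (by rw [h])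
    rw [h] at e
    obtain rfl : m = n := by simpa [Prod.ext_iff] using e
    exact hn
  obtain ⟨c, d, hcM, hdM, hcm, hdm, hcd⟩ :
      ∃ c d, c ∈ M ∧ d ∈ M ∧ c ≠ m ∧ d ≠ m ∧ c < d := by
    rcases hab.lt_or_gt with hlt | hlt
    · exact ⟨a, b, haM, hbM, ham, hbm, hlt⟩
    · exact ⟨b, a, hbM, haM, hbm, ham, hlt⟩
  rcases lt_trichotomy m c with h1 | h1 | h1
  · exact (fix_gen hSep hM hN φ hm hcM hdM h1 hcd).1
  · exact absurd h1.symm hcm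
  · rcases lt_trichotomy m d with h2' | h2' | h2'
    · exact (fix_gen hSep hM hN φ hcM hm hdM h1 h2').2.1
    · exact absurd h2'.symm hdm
    · exact (fix_gen hSep hM hN φ hcM hdM hm hcd h2').2.2


/-- If `M_∞` is strongly 3-separating and `M, N ⊆ M_∞` are distinct subsets
with at least 3 elements each, then `S_M` and `S_N` are not isomorphic; hence
`{S_M : M ⊆ M_∞, |M| ≥ 3}` consists of pairwise non-isomorphic subsemigroups
of `ℕ × ℕ`. -/
theorem SM_not_iso_SN_of_strongSep3 (Minf : Set ℕ+) (hMinf : StrongSep3 Minf)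
    (M N : Set ℕ+) (hM : M ⊆ Minf) (hN : N ⊆ Minf)
    (hMcard : 3 ≤ M.encard) (hNcard : 3 ≤ N.encard) (hMN : M ≠ N) :
    ¬ Nonempty (SM M ≃+ SM N) := by
  rintro ⟨φ⟩
  exact hMN (Set.Subset.antisymm (subset_of_iso hMinf.1 hM hN hMcard φ)
    (subset_of_iso hMinf.1 hN hM hNcard φ.symm))
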